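/- Suppose the convection kernel satisfies γ^conv(|s|) = (|s|/η) γ^diff(|s|) and ∫_{B_1(0)} γ^conv(|s|)|s| ds = d/η < ∞. Then for every u, v ∈ S_δ(Ω) and b ∈ L^∞, one has |(b · G_δ u, v)| ≤ C ‖b‖_{L^∞} ‖u‖_{S_δ(Ω)} ‖v‖_{L²(Ω)}, where C depends only on the moment bound. Consequently the optimal test quantity sup_{u ∈ S_δ(Ω), u ≠ 0} |b(u,v)|/‖u‖_{S_δ(Ω)} is finite for every v ∈ S_δ(Ω), where b(u,v) = ε a(u,v) + (b·G_δ u, v). -/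

import Mathlib

open MeasureTheory
open scoped RealInnerProductSpace
open scoped ENNReal

/-- Optimization of AM-GM: if `c ≤ (t*a + b/t)/2` for all `t > 0`, then `c ≤ √a √b`. -/
lemma amgm_opt {a b c : ℝ} (ha : 0 ≤ a) (hb : 0 ≤ b)
    (h : ∀ t : ℝ, 0 < t → c ≤ (t * a + b / t) / 2) : c ≤ Real.sqrt a * Real.sqrt b := by
  have hsa := Real.sqrt_nonneg a
  have hsb := Real.sqrt_nonneg b
  rcases eq_or_lt_of_le ha with ha0 | hapos
  · have h0 : c ≤ 0 := by
      by_contra hc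
      push_neg at hc
      rcases eq_or_lt_of_le hb with hb0 | hbpos
      · have := h 1 one_pos
        rw [← ha0, ← hb0] at this
        norm_num at this
        linarith
      · have ht : 0 < b / c := div_pos hbpos hc
        have h2 := h (b / c) ht
        rw [← ha0] at h2
        have hbc : b / (b / c) = c := by field_simp
        rw [mul_zero, zero_add, hbc] at h2
        linarith
    nlinarith
  · rcases eq_or_lt_of_le hb with hb0 | hbpos
    · have h0 : c ≤ 0 := by
        by_contra hc
        push_neg at hc
        have ht : 0 < c / a := div_pos hc hapos
        have h2 := h (c / a) ht
        rw [← hb0] at h2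
        have hca : c / a * a = c := by field_simp
        rw [zero_div, add_zero, hca] at h2
        linarith
      nlinarith
    · have hs : 0 < Real.sqrt a := Real.sqrt_pos.mpr hapos
      have hr : 0 < Real.sqrt b := Real.sqrt_pos.mpr hbpos
      have hss : Real.sqrt a * Real.sqrt a = a := Real.mul_self_sqrt ha
      have hrr : Real.sqrt b * Real.sqrt b = b := Real.mul_self_sqrt hb
      have key := h (Real.sqrt b / Real.sqrt a) (div_pos hr hs)
      have h1 : Real.sqrt b / Real.sqrt a * a = Real.sqrt a * Real.sqrt b := by
        rw [div_mul_eq_mul_div, div_eq_iff (ne_of_gt hs)]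
        nlinarith
      have h2 : b / (Real.sqrt b / Real.sqrt a) = Real.sqrt a * Real.sqrt b := by
        rw [div_div_eq_mul_div, div_eq_iff (ne_of_gt hr)]
        nlinarith
      rw [h1, h2] at key
      linarith

lemma stmt5_pointwise {d : ℕ} {δ η t Bb : ℝ} (hδ : 0 < δ) (hη : 0 < η) (ht : 0 < t) (hBb : 0 ≤ Bb)
    (Ω Ωδ : Set (EuclideanSpace ℝ (Fin d)))
    (hball : ∀ x ∈ Ω, Metric.ball x δ ⊆ Ωδ)
    (H : EuclideanSpace ℝ (Fin d) → Set (EuclideanSpace ℝ (Fin d)))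
    (hH : ∀ x, H x ⊆ Metric.ball x δ) (hHmeas : ∀ x, MeasurableSet (H x))
    (bvec : EuclideanSpace ℝ (Fin d) → EuclideanSpace ℝ (Fin d))
    (hb : ∀ x, ‖bvec x‖ ≤ Bb)
    (γdiff γconv : ℝ → ℝ)
    (hγd0 : ∀ r, 0 ≤ γdiff r) (hγc0 : ∀ r, 0 ≤ γconv r)
    (hrel : ∀ r, γconv r = (r / η) * γdiff r)
    (u v : EuclideanSpace ℝ (Fin d) → ℝ)
    (M : ℝ≥0∞) (hMne : M ≠ ⊤)
    (hP : ∀ x : EuclideanSpace ℝ (Fin d),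
      (∫⁻ y in Metric.ball x δ, ENNReal.ofReal (γconv (dist y x) * dist y x)) = M)
    (x : EuclideanSpace ℝ (Fin d)) (hxΩ : x ∈ Ω)
    (hxsec : AEMeasurable
      (fun y => ENNReal.ofReal (γdiff (dist x y) * (u y - u x) ^ 2))
      ((volume : Measure (EuclideanSpace ℝ (Fin d))).restrict Ωδ)) :
    ENNReal.ofReal ‖(∫ y in H x,
        (⟪bvec x, y - x⟫ / ‖y - x‖) * γconv (dist y x) * (u y - u x)) * v x‖ ≤
      ENNReal.ofReal Bb *
        ((ENNReal.ofReal (t * v x ^ 2) * M +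
          (∫⁻ y in Ωδ, ENNReal.ofReal (γdiff (dist x y) * (u y - u x) ^ 2)) *
            ENNReal.ofReal (1 / (η * t))) / 2) := by
  set μ : Measure (EuclideanSpace ℝ (Fin d)) := volume with hμdef
  have hHsubΩδ : H x ⊆ Ωδ := (hH x).trans (hball x hxΩ)
  -- Step A : bound the inner integral
  have hIbound : ENNReal.ofReal
      |∫ y in H x, (⟪bvec x, y - x⟫ / ‖y - x‖) * γconv (dist y x) * (u y - u x)| ≤
      ENNReal.ofReal Bb *
        ∫⁻ y in H x, ENNReal.ofReal (γconv (dist y x) * |u y - u x|) ∂μ := by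
    have h1 : |∫ y in H x, (⟪bvec x, y - x⟫ / ‖y - x‖) * γconv (dist y x) * (u y - u x)| ≤
        (∫⁻ y in H x, ENNReal.ofReal
          ‖(⟪bvec x, y - x⟫ / ‖y - x‖) * γconv (dist y x) * (u y - u x)‖ ∂μ).toReal := by
      rw [← Real.norm_eq_abs]
      exact norm_integral_le_lintegral_norm _
    have h2 : ENNReal.ofReal
        |∫ y in H x, (⟪bvec x, y - x⟫ / ‖y - x‖) * γconv (dist y x) * (u y - u x)| ≤
        ∫⁻ y in H x, ENNReal.ofReal
          ‖(⟪bvec x, y - x⟫ / ‖y - x‖) * γconv (dist y x) * (u y - u x)‖ ∂μ :=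
      le_trans (ENNReal.ofReal_le_ofReal h1) ENNReal.ofReal_toReal_le
    refine le_trans h2 ?_
    rw [← lintegral_const_mul' _ _ ENNReal.ofReal_ne_top]
    refine lintegral_mono fun y => ?_
    rw [← ENNReal.ofReal_mul hBb]
    apply ENNReal.ofReal_le_ofReal
    have hq : |⟪bvec x, y - x⟫ / ‖y - x‖| ≤ Bb := by
      rcases eq_or_ne y x with rfl | hyx
      · simpa using hBb
      · have hny : 0 < ‖y - x‖ := by
          rw [norm_pos_iff, sub_ne_zero]; exact hyx
        rw [abs_div, abs_of_nonneg (norm_nonneg _), div_le_iff₀ hny]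
        calc |⟪bvec x, y - x⟫| ≤ ‖bvec x‖ * ‖y - x‖ := abs_real_inner_le_norm _ _
          _ ≤ Bb * ‖y - x‖ := mul_le_mul_of_nonneg_right (hb x) (norm_nonneg _)
    calc ‖(⟪bvec x, y - x⟫ / ‖y - x‖) * γconv (dist y x) * (u y - u x)‖
        = |⟪bvec x, y - x⟫ / ‖y - x‖| * (γconv (dist y x) * |u y - u x|) := by
          rw [Real.norm_eq_abs, abs_mul, abs_mul, abs_of_nonneg (hγc0 _), mul_assoc]
      _ ≤ Bb * (γconv (dist y x) * |u y - u x|) :=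
          mul_le_mul_of_nonneg_right hq (mul_nonneg (hγc0 _) (abs_nonneg _))
  -- Step B : AM-GM bound for J * |v x|
  have hxsec2 : AEMeasurable
      (fun y => ENNReal.ofReal (γdiff (dist x y) * (u y - u x) ^ 2)) (μ.restrict (H x)) := by
    have h0 := hxsec.restrict (s := H x)
    rwa [Measure.restrict_restrict (hHmeas x),
      Set.inter_eq_self_of_subset_left hHsubΩδ] at h0
  have hJv : (∫⁻ y in H x, ENNReal.ofReal (γconv (dist y x) * |u y - u x|) ∂μ) *
      ENNReal.ofReal |v x| ≤
      (ENNReal.ofReal (t * v x ^ 2) * M +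
        (∫⁻ y in Ωδ, ENNReal.ofReal (γdiff (dist x y) * (u y - u x) ^ 2)) *
          ENNReal.ofReal (1 / (η * t))) / 2 := by
    rw [← lintegral_mul_const' _ _ ENNReal.ofReal_ne_top]
    rw [ENNReal.le_div_iff_mul_le (Or.inl two_ne_zero) (Or.inl ENNReal.ofNat_ne_top)]
    rw [← lintegral_mul_const' 2 _ ENNReal.ofNat_ne_top]
    have hpt : ∀ y, (ENNReal.ofReal (γconv (dist y x) * |u y - u x|) *
          ENNReal.ofReal |v x|) * 2 ≤
        ENNReal.ofReal (t * v x ^ 2 * (γconv (dist y x) * dist y x)) +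
          ENNReal.ofReal (γdiff (dist x y) * (u y - u x) ^ 2 * (1 / (η * t))) := by
      intro y
      rw [dist_comm x y]
      have h2eq : ENNReal.ofReal (γconv (dist y x) * |u y - u x|) *
          ENNReal.ofReal |v x| * 2 =
          ENNReal.ofReal (γconv (dist y x) * |u y - u x| * |v x| * 2) := by
        rw [ENNReal.ofReal_mul
            (mul_nonneg (mul_nonneg (hγc0 _) (abs_nonneg _)) (abs_nonneg _)),
          ENNReal.ofReal_mul (mul_nonneg (hγc0 _) (abs_nonneg _)),
          ENNReal.ofReal_ofNat]
      rw [h2eq,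
        ← ENNReal.ofReal_add
          (mul_nonneg (by positivity) (mul_nonneg (hγc0 _) dist_nonneg))
          (mul_nonneg (mul_nonneg (hγd0 _) (sq_nonneg _)) (by positivity))]
      apply ENNReal.ofReal_le_ofReal
      -- real AM-GM
      set r := dist y x with hrdef
      set γc := γconv r
      set γd := γdiff r
      set Δ := u y - u x
      set w := v x
      have hγc : 0 ≤ γc := hγc0 r
      have hγd : 0 ≤ γd := hγd0 r
      have hr : (0:ℝ) ≤ r := dist_nonneg
      have hrel' : γc = (r / η) * γd := hrel r
      set A := t * w ^ 2 * (γc * r) with hAdef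
      set B := γd * Δ ^ 2 * (1 / (η * t)) with hBdef
      have hA : 0 ≤ A := mul_nonneg (mul_nonneg ht.le (sq_nonneg _)) (mul_nonneg hγc hr)
      have hB : 0 ≤ B := mul_nonneg (mul_nonneg hγd (sq_nonneg _)) (by positivity)
      have hAB : A * B = (γc * (|Δ| * |w|)) ^ 2 := by
        rw [hAdef, hBdef, mul_pow, mul_pow, sq_abs, sq_abs, hrel']
        field_simp
      have h2ab : Real.sqrt A * Real.sqrt B = γc * (|Δ| * |w|) := by
        rw [← Real.sqrt_mul hA, hAB,
          Real.sqrt_sq (mul_nonneg hγc (mul_nonneg (abs_nonneg _) (abs_nonneg _)))]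
      have hAM : 2 * (Real.sqrt A * Real.sqrt B) ≤ A + B := by
        nlinarith [sq_nonneg (Real.sqrt A - Real.sqrt B), Real.sq_sqrt hA, Real.sq_sqrt hB]
      rw [h2ab] at hAM
      have heq : γc * |Δ| * |w| * 2 = 2 * (γc * (|Δ| * |w|)) := by ring
      rw [heq]
      linarith
    calc (∫⁻ y in H x, (ENNReal.ofReal (γconv (dist y x) * |u y - u x|) *
            ENNReal.ofReal |v x|) * 2 ∂μ)
        ≤ ∫⁻ y in H x, (ENNReal.ofReal (t * v x ^ 2 * (γconv (dist y x) * dist y x)) +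
            ENNReal.ofReal (γdiff (dist x y) * (u y - u x) ^ 2 * (1 / (η * t)))) ∂μ :=
          lintegral_mono hpt
      _ = (∫⁻ y in H x, ENNReal.ofReal (t * v x ^ 2 * (γconv (dist y x) * dist y x)) ∂μ) +
          ∫⁻ y in H x, ENNReal.ofReal (γdiff (dist x y) * (u y - u x) ^ 2 * (1 / (η * t))) ∂μ := by
          refine lintegral_add_right' _ ?_
          have : (fun y => ENNReal.ofReal (γdiff (dist x y) * (u y - u x) ^ 2 * (1 / (η * t))))
              = fun y => ENNReal.ofReal (γdiff (dist x y) * (u y - u x) ^ 2) *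
                  ENNReal.ofReal (1 / (η * t)) := by
            funext y
            rw [ENNReal.ofReal_mul (mul_nonneg (hγd0 _) (sq_nonneg _))]
          rw [this]
          exact hxsec2.mul_const _
      _ ≤ ENNReal.ofReal (t * v x ^ 2) * M +
          (∫⁻ y in Ωδ, ENNReal.ofReal (γdiff (dist x y) * (u y - u x) ^ 2)) *
            ENNReal.ofReal (1 / (η * t)) := by
          refine add_le_add ?_ ?_
          · have h1 : ∀ y, ENNReal.ofReal (t * v x ^ 2 * (γconv (dist y x) * dist y x)) =
                ENNReal.ofReal (t * v x ^ 2) * ENNReal.ofReal (γconv (dist y x) * dist y x) :=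
              fun y => ENNReal.ofReal_mul (mul_nonneg ht.le (sq_nonneg _))
            simp only [h1]
            rw [lintegral_const_mul' _ _ ENNReal.ofReal_ne_top]
            refine mul_le_mul_right ?_ _
            calc (∫⁻ y in H x, ENNReal.ofReal (γconv (dist y x) * dist y x) ∂μ)
                ≤ ∫⁻ y in Metric.ball x δ, ENNReal.ofReal (γconv (dist y x) * dist y x) ∂μ :=
                  lintegral_mono_set (hH x)
              _ = M := hP x
          · have h1 : ∀ y, ENNReal.ofReal (γdiff (dist x y) * (u y - u x) ^ 2 * (1 / (η * t))) =
                ENNReal.ofReal (γdiff (dist x y) * (u y - u x) ^ 2) *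
                  ENNReal.ofReal (1 / (η * t)) :=
              fun y => ENNReal.ofReal_mul (mul_nonneg (hγd0 _) (sq_nonneg _))
            simp only [h1]
            rw [lintegral_mul_const' _ _ ENNReal.ofReal_ne_top]
            exact mul_le_mul_left (lintegral_mono_set hHsubΩδ) _
  -- assemble
  calc ENNReal.ofReal ‖(∫ y in H x,
          (⟪bvec x, y - x⟫ / ‖y - x‖) * γconv (dist y x) * (u y - u x)) * v x‖
      = ENNReal.ofReal
          |∫ y in H x, (⟪bvec x, y - x⟫ / ‖y - x‖) * γconv (dist y x) * (u y - u x)| *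
          ENNReal.ofReal |v x| := by
        rw [Real.norm_eq_abs, abs_mul, ENNReal.ofReal_mul (abs_nonneg _)]
    _ ≤ (ENNReal.ofReal Bb *
          ∫⁻ y in H x, ENNReal.ofReal (γconv (dist y x) * |u y - u x|) ∂μ) *
          ENNReal.ofReal |v x| := mul_le_mul_left hIbound _
    _ = ENNReal.ofReal Bb *
          ((∫⁻ y in H x, ENNReal.ofReal (γconv (dist y x) * |u y - u x|) ∂μ) *
            ENNReal.ofReal |v x|) := mul_assoc _ _ _
    _ ≤ _ := mul_le_mul_right hJv _

lemma stmt5_outer {d : ℕ} {η t Bb Eu : ℝ} (hη : 0 < η) (ht : 0 < t) (hBb : 0 ≤ Bb) (hEu0 : 0 ≤ Eu)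
    (Ω Ωδ : Set (EuclideanSpace ℝ (Fin d))) (hsub : Ω ⊆ Ωδ)
    (v : EuclideanSpace ℝ (Fin d) → ℝ) (hv1 : Measurable v)
    (hVInt : IntegrableOn (fun x => v x ^ 2) Ω)
    (I : EuclideanSpace ℝ (Fin d) → ℝ)
    (Q : EuclideanSpace ℝ (Fin d) → ℝ≥0∞)
    (hQ : (∫⁻ x in Ωδ, Q x) = ENNReal.ofReal Eu)
    (hx : ∀ᵐ x ∂(volume : Measure (EuclideanSpace ℝ (Fin d))).restrict Ω,
      ENNReal.ofReal ‖I x * v x‖ ≤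
        ENNReal.ofReal Bb *
          ((ENNReal.ofReal (t * v x ^ 2) * ENNReal.ofReal ((d:ℝ)/η) +
            Q x * ENNReal.ofReal (1 / (η * t))) / 2)) :
    |∫ x in Ω, I x * v x| ≤
      (t * (Bb * (((d:ℝ)/η) * ∫ x in Ω, v x ^ 2)) + (Bb * (Eu/η))/t)/2 := by
  set μ : Measure (EuclideanSpace ℝ (Fin d)) := volume with hμdef
  set V : ℝ := ∫ x in Ω, v x ^ 2 with hVdef
  have hV0 : 0 ≤ V := integral_nonneg fun x => sq_nonneg _
  have hVlin : (∫⁻ x in Ω, ENNReal.ofReal (v x ^ 2) ∂μ) = ENNReal.ofReal V :=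
    (ofReal_integral_eq_lintegral_ofReal hVInt
      (Filter.Eventually.of_forall fun x => sq_nonneg _)).symm
  have hstep1 : |∫ x in Ω, I x * v x| ≤
      (∫⁻ x in Ω, ENNReal.ofReal ‖I x * v x‖ ∂μ).toReal := by
    rw [← Real.norm_eq_abs]
    exact norm_integral_le_lintegral_norm _
  set R : ℝ := Bb/2 * (t*((d:ℝ)/η)*V + Eu*(1/(η*t))) with hRdef
  have hR0 : 0 ≤ R := by positivity
  have hchain : (∫⁻ x in Ω, ENNReal.ofReal ‖I x * v x‖ ∂μ) ≤ ENNReal.ofReal R := by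
    calc (∫⁻ x in Ω, ENNReal.ofReal ‖I x * v x‖ ∂μ)
        ≤ ∫⁻ x in Ω, ENNReal.ofReal Bb *
            ((ENNReal.ofReal (t * v x ^ 2) * ENNReal.ofReal ((d:ℝ)/η) +
              Q x * ENNReal.ofReal (1 / (η * t))) / 2) ∂μ := lintegral_mono_ae hx
      _ = ∫⁻ x in Ω, (ENNReal.ofReal Bb / 2) *
            (ENNReal.ofReal (t * v x ^ 2) * ENNReal.ofReal ((d:ℝ)/η) +
              Q x * ENNReal.ofReal (1 / (η * t))) ∂μ := by
          congr 1
          funext x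
          simp only [div_eq_mul_inv]
          ring
      _ = (ENNReal.ofReal Bb / 2) *
            ∫⁻ x in Ω, (ENNReal.ofReal (t * v x ^ 2) * ENNReal.ofReal ((d:ℝ)/η) +
              Q x * ENNReal.ofReal (1 / (η * t))) ∂μ :=
          lintegral_const_mul' _ _
            (ENNReal.div_lt_top ENNReal.ofReal_ne_top two_ne_zero).ne
      _ = (ENNReal.ofReal Bb / 2) *
            ((∫⁻ x in Ω, ENNReal.ofReal (t * v x ^ 2) * ENNReal.ofReal ((d:ℝ)/η) ∂μ) +
              ∫⁻ x in Ω, Q x * ENNReal.ofReal (1 / (η * t)) ∂μ) := by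
          rw [lintegral_add_left]
          exact (((hv1.pow_const 2).const_mul t).ennreal_ofReal).mul_const _
      _ ≤ (ENNReal.ofReal Bb / 2) *
            ((ENNReal.ofReal t * ENNReal.ofReal ((d:ℝ)/η)) * ENNReal.ofReal V +
              ENNReal.ofReal Eu * ENNReal.ofReal (1 / (η * t))) := by
          refine mul_le_mul_right (add_le_add ?_ ?_) _
          · have heq : ∀ x, ENNReal.ofReal (t * v x ^ 2) * ENNReal.ofReal ((d:ℝ)/η) =
                (ENNReal.ofReal t * ENNReal.ofReal ((d:ℝ)/η)) * ENNReal.ofReal (v x ^ 2) :=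
              fun x => by rw [ENNReal.ofReal_mul ht.le]; ring
            simp only [heq]
            rw [lintegral_const_mul' _ _
              (ENNReal.mul_ne_top ENNReal.ofReal_ne_top ENNReal.ofReal_ne_top), hVlin]
          · rw [lintegral_mul_const' _ _ ENNReal.ofReal_ne_top, ← hQ]
            exact mul_le_mul_left
              (lintegral_mono' (Measure.restrict_mono hsub le_rfl) le_rfl) _
      _ = ENNReal.ofReal R := by
          rw [hRdef]
          rw [ENNReal.ofReal_mul (by positivity : (0:ℝ) ≤ Bb/2),
            ENNReal.ofReal_add (by positivity)
              (mul_nonneg hEu0 (by positivity)),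
            ENNReal.ofReal_mul (by positivity : (0:ℝ) ≤ t*((d:ℝ)/η)),
            ENNReal.ofReal_mul ht.le,
            ENNReal.ofReal_mul hEu0,
            ENNReal.ofReal_div_of_pos (by norm_num : (0:ℝ) < 2),
            ENNReal.ofReal_ofNat]
  have hfin : |∫ x in Ω, I x * v x| ≤ R :=
    hstep1.trans (ENNReal.toReal_le_of_le_ofReal hR0 hchain)
  calc |∫ x in Ω, I x * v x| ≤ R := hfin
    _ = (t * (Bb * (((d:ℝ)/η) * V)) + (Bb * (Eu/η))/t)/2 := by
        rw [hRdef]; field_simp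

lemma stmt5_cs {d : ℕ} (Ωδ : Set (EuclideanSpace ℝ (Fin d)))
    (γdiff : ℝ → ℝ) (hγd0 : ∀ r, 0 ≤ γdiff r)
    (u v : EuclideanSpace ℝ (Fin d) → ℝ)
    (huE : MeasureTheory.IntegrableOn
      (fun p : EuclideanSpace ℝ (Fin d) × EuclideanSpace ℝ (Fin d) =>
        γdiff (dist p.1 p.2) * (u p.2 - u p.1) ^ 2) (Ωδ ×ˢ Ωδ))
    (hvE : MeasureTheory.IntegrableOn
      (fun p : EuclideanSpace ℝ (Fin d) × EuclideanSpace ℝ (Fin d) =>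
        γdiff (dist p.1 p.2) * (v p.2 - v p.1) ^ 2) (Ωδ ×ˢ Ωδ)) :
    |∫ p in Ωδ ×ˢ Ωδ, γdiff (dist p.1 p.2) * (u p.2 - u p.1) * (v p.2 - v p.1)| ≤
      Real.sqrt (∫ p in Ωδ ×ˢ Ωδ, γdiff (dist p.1 p.2) * (u p.2 - u p.1) ^ 2) *
      Real.sqrt (∫ p in Ωδ ×ˢ Ωδ, γdiff (dist p.1 p.2) * (v p.2 - v p.1) ^ 2) := by
  set Eu := ∫ p in Ωδ ×ˢ Ωδ, γdiff (dist p.1 p.2) * (u p.2 - u p.1) ^ 2 with hEudef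
  set Ev := ∫ p in Ωδ ×ˢ Ωδ, γdiff (dist p.1 p.2) * (v p.2 - v p.1) ^ 2 with hEvdef
  have hEu0 : 0 ≤ Eu := integral_nonneg fun p => mul_nonneg (hγd0 _) (sq_nonneg _)
  have hEv0 : 0 ≤ Ev := integral_nonneg fun p => mul_nonneg (hγd0 _) (sq_nonneg _)
  by_cases hGi : Integrable
      (fun p : EuclideanSpace ℝ (Fin d) × EuclideanSpace ℝ (Fin d) =>
        γdiff (dist p.1 p.2) * (u p.2 - u p.1) * (v p.2 - v p.1))
      ((volume : Measure (EuclideanSpace ℝ (Fin d) × EuclideanSpace ℝ (Fin d))).restrict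
        (Ωδ ×ˢ Ωδ))
  · apply amgm_opt hEu0 hEv0
    intro t ht
    have hpt : ∀ p : EuclideanSpace ℝ (Fin d) × EuclideanSpace ℝ (Fin d),
        |γdiff (dist p.1 p.2) * (u p.2 - u p.1) * (v p.2 - v p.1)| ≤
        (t * (γdiff (dist p.1 p.2) * (u p.2 - u p.1) ^ 2) +
          (γdiff (dist p.1 p.2) * (v p.2 - v p.1) ^ 2) / t) / 2 := by
      intro p
      set γ := γdiff (dist p.1 p.2) with hγdef
      have hγ : 0 ≤ γ := hγd0 _
      set a := u p.2 - u p.1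
      set b := v p.2 - v p.1
      have habs : |γ * a * b| = γ * (|a| * |b|) := by
        rw [abs_mul, abs_mul, abs_of_nonneg hγ, mul_assoc]
      have h2 : 2 * t * (γ * (|a| * |b|)) ≤ t ^ 2 * (γ * |a| ^ 2) + γ * |b| ^ 2 := by
        nlinarith [mul_nonneg hγ (sq_nonneg (t * |a| - |b|))]
      rw [sq_abs, sq_abs] at h2
      rw [habs]
      rw [le_div_iff₀ (by norm_num : (0:ℝ) < 2)]
      refine le_of_mul_le_mul_right ?_ ht
      have hZ : (t * (γ * a ^ 2) + (γ * b ^ 2) / t) * t =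
          t ^ 2 * (γ * a ^ 2) + γ * b ^ 2 := by
        rw [add_mul, div_mul_cancel₀ _ (ne_of_gt ht)]
        ring
      rw [hZ]
      linarith [h2]
    calc |∫ p in Ωδ ×ˢ Ωδ, γdiff (dist p.1 p.2) * (u p.2 - u p.1) * (v p.2 - v p.1)|
        ≤ ∫ p in Ωδ ×ˢ Ωδ, |γdiff (dist p.1 p.2) * (u p.2 - u p.1) * (v p.2 - v p.1)| := by
          exact norm_integral_le_integral_norm
            (fun p : EuclideanSpace ℝ (Fin d) × EuclideanSpace ℝ (Fin d) =>
              γdiff (dist p.1 p.2) * (u p.2 - u p.1) * (v p.2 - v p.1))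
      _ ≤ ∫ p in Ωδ ×ˢ Ωδ, (t * (γdiff (dist p.1 p.2) * (u p.2 - u p.1) ^ 2) +
            (γdiff (dist p.1 p.2) * (v p.2 - v p.1) ^ 2) / t) / 2 := by
          refine integral_mono hGi.abs ?_ hpt
          exact (((huE.const_mul t).add (hvE.div_const t)).div_const 2)
      _ = (t * Eu + Ev / t) / 2 := by
          rw [integral_div]
          rw [integral_add (huE.const_mul t) (hvE.div_const t)]
          rw [integral_const_mul, integral_div]
  · rw [integral_undef hGi, abs_zero]
    positivity

lemma amgm_final {dd η Bb Eu V cp C : ℝ} (hdd : 0 ≤ dd) (hη : 0 < η) (hBb : 0 ≤ Bb)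
    (hEu0 : 0 ≤ Eu) (hV0 : 0 ≤ V) (hCdef : C = Real.sqrt dd / η + 1)
    (hkt : ∀ t : ℝ, 0 < t →
      cp ≤ (t * (Bb * ((dd/η) * V)) + (Bb * (Eu/η))/t)/2) :
    cp ≤ C * Bb * Real.sqrt Eu * Real.sqrt V := by
  have ha : 0 ≤ Bb * ((dd/η) * V) := by positivity
  have hb : 0 ≤ Bb * (Eu/η) := by positivity
  have h1 : cp ≤ Real.sqrt (Bb * ((dd/η) * V)) * Real.sqrt (Bb * (Eu/η)) :=
    amgm_opt ha hb hkt
  refine h1.trans ?_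
  have hCpos : 0 < C := by rw [hCdef]; positivity
  refine le_of_pow_le_pow_left₀ two_ne_zero (by positivity) ?_
  rw [mul_pow, Real.sq_sqrt ha, Real.sq_sqrt hb]
  have hd2 : Real.sqrt dd ^ 2 = dd := Real.sq_sqrt hdd
  have hE2 : Real.sqrt Eu ^ 2 = Eu := Real.sq_sqrt hEu0
  have hV2 : Real.sqrt V ^ 2 = V := Real.sq_sqrt hV0
  have hC2 : C ^ 2 = dd/η^2 + 2*Real.sqrt dd/η + 1 := by
    rw [hCdef, add_sq, div_pow, hd2, one_pow, mul_one]
    ring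
  have hrw : (C * Bb * Real.sqrt Eu * Real.sqrt V)^2 = C^2 * Bb^2 * Eu * V := by
    rw [mul_pow, mul_pow, mul_pow, hE2, hV2]
  rw [hrw, hC2]
  have hsd : 0 ≤ Real.sqrt dd := Real.sqrt_nonneg _
  have hexp : Bb * (dd/η * V) * (Bb * (Eu/η)) = (dd/η^2) * Bb^2 * Eu * V := by
    field_simp
  rw [hexp]
  have hgoal : 0 ≤ (2*Real.sqrt dd/η + 1) * Bb^2 * Eu * V := by positivity
  nlinarith [hgoal]

variable {d : ℕ}

/-- Membership in the nonlocal energy space `S_δ(Ω)`: vanishing on the interaction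
layer, square integrable on `Ω_δ`, with finite nonlocal Dirichlet energy. -/
def MemEnergy (Ω Ωδ : Set (EuclideanSpace ℝ (Fin d))) (γdiff : ℝ → ℝ)
    (u : EuclideanSpace ℝ (Fin d) → ℝ) : Prop :=
  Measurable u ∧ (∀ x ∈ Ωδ \ Ω, u x = 0) ∧
    MeasureTheory.IntegrableOn (fun x => u x ^ 2) Ωδ ∧
    MeasureTheory.IntegrableOn
      (fun p : EuclideanSpace ℝ (Fin d) × EuclideanSpace ℝ (Fin d) =>
        γdiff (dist p.1 p.2) * (u p.2 - u p.1) ^ 2) (Ωδ ×ˢ Ωδ)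

/-- The nonlocal energy (semi-)norm `|u|_{S_δ(Ω)}`. -/
noncomputable def energyNorm (Ωδ : Set (EuclideanSpace ℝ (Fin d))) (γdiff : ℝ → ℝ)
    (u : EuclideanSpace ℝ (Fin d) → ℝ) : ℝ :=
  Real.sqrt (∫ p in Ωδ ×ˢ Ωδ, γdiff (dist p.1 p.2) * (u p.2 - u p.1) ^ 2)

/-- The convection pairing `(b · G_δ u, v)_{L²(Ω)}`. -/
noncomputable def convPairing (Ω : Set (EuclideanSpace ℝ (Fin d)))
    (H : EuclideanSpace ℝ (Fin d) → Set (EuclideanSpace ℝ (Fin d)))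
    (bvec : EuclideanSpace ℝ (Fin d) → EuclideanSpace ℝ (Fin d)) (γconv : ℝ → ℝ)
    (u v : EuclideanSpace ℝ (Fin d) → ℝ) : ℝ :=
  ∫ x in Ω, (∫ y in H x, (⟪bvec x, y - x⟫ / ‖y - x‖) * γconv (dist y x) * (u y - u x)) * v x

/-- The nonlocal Dirichlet form `a(u,v)`. -/
noncomputable def dirichletForm (Ωδ : Set (EuclideanSpace ℝ (Fin d))) (γdiff : ℝ → ℝ)
    (u v : EuclideanSpace ℝ (Fin d) → ℝ) : ℝ :=
  ∫ p in Ωδ ×ˢ Ωδ, γdiff (dist p.1 p.2) * (u p.2 - u p.1) * (v p.2 - v p.1)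

/-- with the kernel relation `γᶜᵒⁿᵛ = (|s|/η) γᵈⁱᶠᶠ` and a finite first
moment of the convection kernel, the convection pairing is bounded by
`C ‖b‖_∞ ‖u‖_{S_δ} ‖v‖_{L²}`; consequently the optimal test quantity
`sup_{u ≠ 0} |b(u,v)|/‖u‖_{S_δ}` is finite for each `v ∈ S_δ(Ω)`, where
`b(u,v) = ε a(u,v) + (b·G_δ u, v)`. -/
theorem stmt5 {δ η ε : ℝ} (hδ : 0 < δ) (hη : 0 < η) (hε : 0 < ε)
    (Ω Ωδ : Set (EuclideanSpace ℝ (Fin d)))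
    (hΩmeas : MeasurableSet Ω) (hΩδmeas : MeasurableSet Ωδ)
    (hΩopen : IsOpen Ω) (hΩbdd : Bornology.IsBounded Ω) (hsub : Ω ⊆ Ωδ)
    (hball : ∀ x ∈ Ω, Metric.ball x δ ⊆ Ωδ)
    (H : EuclideanSpace ℝ (Fin d) → Set (EuclideanSpace ℝ (Fin d)))
    (hH : ∀ x, H x ⊆ Metric.ball x δ) (hHmeas : ∀ x, MeasurableSet (H x))
    (bvec : EuclideanSpace ℝ (Fin d) → EuclideanSpace ℝ (Fin d))
    (Bb : ℝ) (hb : ∀ x, ‖bvec x‖ ≤ Bb) (hBb : 0 ≤ Bb)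
    (γdiff γconv : ℝ → ℝ)
    (hγd0 : ∀ r, 0 ≤ γdiff r) (hγdsupp : ∀ r, δ < r → γdiff r = 0)
    (hγc0 : ∀ r, 0 ≤ γconv r)
    (hrel : ∀ r, γconv r = (r / η) * γdiff r)
    (hmom : (∫ s in Metric.ball (0 : EuclideanSpace ℝ (Fin d)) δ, γconv ‖s‖ * ‖s‖) = d / η) :
    ∃ C > 0,
      (∀ u v : EuclideanSpace ℝ (Fin d) → ℝ,
          MemEnergy Ω Ωδ γdiff u → MemEnergy Ω Ωδ γdiff v →
          |convPairing Ω H bvec γconv u v| ≤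
            C * Bb * energyNorm Ωδ γdiff u * Real.sqrt (∫ x in Ω, v x ^ 2)) ∧
      (∀ v : EuclideanSpace ℝ (Fin d) → ℝ, MemEnergy Ω Ωδ γdiff v →
        BddAbove (Set.range
          fun u : {u : EuclideanSpace ℝ (Fin d) → ℝ // MemEnergy Ω Ωδ γdiff u} =>
            |ε * dirichletForm Ωδ γdiff u.1 v + convPairing Ω H bvec γconv u.1 v| /
              energyNorm Ωδ γdiff u.1)) := by
  classical
  rcases Nat.eq_zero_or_pos d with hd0 | hdpos
  · -- degenerate dimension-zero case: everything vanishes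
    subst hd0
    have hsing : ∀ x y : EuclideanSpace ℝ (Fin 0), x = y := fun x y =>
      PiLp.ext fun i => Fin.elim0 i
    have hγc00 : γconv 0 = 0 := by rw [hrel]; simp
    have hcp : ∀ u v : EuclideanSpace ℝ (Fin 0) → ℝ,
        convPairing Ω H bvec γconv u v = 0 := by
      intro u v
      unfold convPairing
      have hin : ∀ x, (∫ y in H x,
          (⟪bvec x, y - x⟫ / ‖y - x‖) * γconv (dist y x) * (u y - u x)) = 0 := by
        intro x
        have : ∀ y : EuclideanSpace ℝ (Fin 0),
            (⟪bvec x, y - x⟫ / ‖y - x‖) * γconv (dist y x) * (u y - u x) = 0 := by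
          intro y
          rw [hsing y x]
          simp [dist_self, hγc00]
        simp [this]
      simp [hin]
    have hdf : ∀ u v : EuclideanSpace ℝ (Fin 0) → ℝ,
        dirichletForm Ωδ γdiff u v = 0 := by
      intro u v
      unfold dirichletForm
      have : ∀ p : EuclideanSpace ℝ (Fin 0) × EuclideanSpace ℝ (Fin 0),
          γdiff (dist p.1 p.2) * (u p.2 - u p.1) * (v p.2 - v p.1) = 0 := by
        intro p
        rw [hsing p.2 p.1]
        simp
      simp [this]
    refine ⟨1, one_pos, ?_, ?_⟩
    · intro u v hu hv
      rw [hcp u v, abs_zero]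
      have h1 : 0 ≤ energyNorm Ωδ γdiff u := Real.sqrt_nonneg _
      have h2 : 0 ≤ Real.sqrt (∫ x in Ω, v x ^ 2) := Real.sqrt_nonneg _
      positivity
    · intro v hv
      refine ⟨0, ?_⟩
      rintro z ⟨u, rfl⟩
      simp [hdf, hcp]
  · -- main case `0 < d`
    have hdpos' : (0:ℝ) < (d:ℝ) := by exact_mod_cast hdpos
    -- integrability of the moment integrand
    have hmomInt : IntegrableOn (fun s : EuclideanSpace ℝ (Fin d) => γconv ‖s‖ * ‖s‖)
        (Metric.ball 0 δ) := by
      by_contra hni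
      rw [integral_undef hni] at hmom
      have hpos : (0:ℝ) < (d:ℝ)/η := by positivity
      rw [← hmom] at hpos
      exact lt_irrefl _ hpos
    set M : ℝ≥0∞ := ∫⁻ s in Metric.ball (0:EuclideanSpace ℝ (Fin d)) δ,
        ENNReal.ofReal (γconv ‖s‖ * ‖s‖) with hMdef
    have hM : M = ENNReal.ofReal ((d:ℝ)/η) := by
      rw [← hmom]
      exact (ofReal_integral_eq_lintegral_ofReal hmomInt
        (Filter.Eventually.of_forall fun s => mul_nonneg (hγc0 _) (norm_nonneg _))).symm
    have hMne : M ≠ ⊤ := by rw [hM]; exact ENNReal.ofReal_ne_top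
    -- translation invariance
    have hP : ∀ x : EuclideanSpace ℝ (Fin d),
        (∫⁻ y in Metric.ball x δ, ENNReal.ofReal (γconv (dist y x) * dist y x)) = M := by
      intro x
      rw [hMdef]
      calc (∫⁻ y in Metric.ball x δ, ENNReal.ofReal (γconv (dist y x) * dist y x))
          = ∫⁻ y, (Metric.ball x δ).indicator
              (fun y => ENNReal.ofReal (γconv (dist y x) * dist y x)) y :=
            (lintegral_indicator Metric.isOpen_ball.measurableSet _).symm
        _ = ∫⁻ s, (Metric.ball x δ).indicator
              (fun y => ENNReal.ofReal (γconv (dist y x) * dist y x)) (x + s) :=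
            (lintegral_add_left_eq_self _ x).symm
        _ = ∫⁻ s, (Metric.ball (0:EuclideanSpace ℝ (Fin d)) δ).indicator
              (fun s => ENNReal.ofReal (γconv ‖s‖ * ‖s‖)) s := by
            congr 1
            funext s
            by_cases hs : s ∈ Metric.ball (0:EuclideanSpace ℝ (Fin d)) δ
            · have hdist : dist (x + s) x = ‖s‖ := by
                simp [dist_eq_norm]
              have hs' : x + s ∈ Metric.ball x δ := by
                rw [Metric.mem_ball, hdist]
                simpa [Metric.mem_ball, dist_eq_norm] using hs
              rw [Set.indicator_of_mem hs', Set.indicator_of_mem hs, hdist]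
            · have hs' : x + s ∉ Metric.ball x δ := by
                rw [Metric.mem_ball]
                have hdist : dist (x + s) x = ‖s‖ := by simp [dist_eq_norm]
                rw [hdist]
                simpa [Metric.mem_ball, dist_eq_norm] using hs
              rw [Set.indicator_of_notMem hs', Set.indicator_of_notMem hs]
        _ = ∫⁻ s in Metric.ball (0:EuclideanSpace ℝ (Fin d)) δ,
              ENNReal.ofReal (γconv ‖s‖ * ‖s‖) :=
            lintegral_indicator Metric.isOpen_ball.measurableSet _
    set C : ℝ := Real.sqrt (d:ℝ) / η + 1 with hCdef
    have hCpos : 0 < C := by rw [hCdef]; positivity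
    -- the main convection-pairing bound
    have key : ∀ u v : EuclideanSpace ℝ (Fin d) → ℝ,
        MemEnergy Ω Ωδ γdiff u → MemEnergy Ω Ωδ γdiff v →
        |convPairing Ω H bvec γconv u v| ≤
          C * Bb * energyNorm Ωδ γdiff u * Real.sqrt (∫ x in Ω, v x ^ 2) := by
      intro u v hu hv
      obtain ⟨hu1, hu2, hu3, hu4⟩ := hu
      obtain ⟨hv1, hv2, hv3, hv4⟩ := hv
      -- Tonelli and measurable sections for `u`
      have hgInt : Integrable
          (fun p : EuclideanSpace ℝ (Fin d) × EuclideanSpace ℝ (Fin d) =>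
            γdiff (dist p.1 p.2) * (u p.2 - u p.1) ^ 2)
          (((volume : Measure (EuclideanSpace ℝ (Fin d))).restrict Ωδ).prod
            ((volume : Measure (EuclideanSpace ℝ (Fin d))).restrict Ωδ)) := by
        have h0 := hu4
        rwa [IntegrableOn, Measure.volume_eq_prod, ← Measure.prod_restrict] at h0
      have hG2 : AEMeasurable
          (fun p : EuclideanSpace ℝ (Fin d) × EuclideanSpace ℝ (Fin d) =>
            ENNReal.ofReal (γdiff (dist p.1 p.2) * (u p.2 - u p.1) ^ 2))
          (((volume : Measure (EuclideanSpace ℝ (Fin d))).restrict Ωδ).prod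
            ((volume : Measure (EuclideanSpace ℝ (Fin d))).restrict Ωδ)) :=
        ENNReal.measurable_ofReal.comp_aemeasurable hgInt.aemeasurable
      have hTon : (∫⁻ x in Ωδ, ∫⁻ y in Ωδ,
            ENNReal.ofReal (γdiff (dist x y) * (u y - u x) ^ 2))
          = ENNReal.ofReal (∫ p in Ωδ ×ˢ Ωδ,
              γdiff (dist p.1 p.2) * (u p.2 - u p.1) ^ 2) := by
        rw [← lintegral_prod _ hG2, Measure.prod_restrict, ← Measure.volume_eq_prod]
        exact (ofReal_integral_eq_lintegral_ofReal hu4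
          (Filter.Eventually.of_forall fun p => mul_nonneg (hγd0 _) (sq_nonneg _))).symm
      have hsec : ∀ᵐ x ∂(volume : Measure (EuclideanSpace ℝ (Fin d))).restrict Ωδ,
          AEMeasurable (fun y => ENNReal.ofReal (γdiff (dist x y) * (u y - u x) ^ 2))
            ((volume : Measure (EuclideanSpace ℝ (Fin d))).restrict Ωδ) := by
        obtain ⟨G', hG'meas, hG'eq⟩ := hG2
        filter_upwards [Measure.ae_ae_of_ae_prod hG'eq] with x hx
        exact ⟨fun y => G' (x, y), hG'meas.comp measurable_prodMk_left, hx⟩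
      have hsecΩ : ∀ᵐ x ∂(volume : Measure (EuclideanSpace ℝ (Fin d))).restrict Ω,
          AEMeasurable (fun y => ENNReal.ofReal (γdiff (dist x y) * (u y - u x) ^ 2))
            ((volume : Measure (EuclideanSpace ℝ (Fin d))).restrict Ωδ) :=
        hsec.filter_mono (ae_mono (Measure.restrict_mono hsub le_rfl))
      have hEu0 : 0 ≤ ∫ p in Ωδ ×ˢ Ωδ, γdiff (dist p.1 p.2) * (u p.2 - u p.1) ^ 2 :=
        integral_nonneg fun p => mul_nonneg (hγd0 _) (sq_nonneg _)
      have hV0 : 0 ≤ ∫ x in Ω, v x ^ 2 := integral_nonneg fun x => sq_nonneg _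
      have hVInt : IntegrableOn (fun x => v x ^ 2) Ω := hv3.mono_set hsub
      -- bound for every `t > 0`
      have hkt : ∀ t : ℝ, 0 < t →
          |convPairing Ω H bvec γconv u v| ≤
            (t * (Bb * (((d:ℝ)/η) * ∫ x in Ω, v x ^ 2)) +
              (Bb * ((∫ p in Ωδ ×ˢ Ωδ,
                γdiff (dist p.1 p.2) * (u p.2 - u p.1) ^ 2)/η))/t)/2 := by
        intro t ht
        have hx : ∀ᵐ x ∂(volume : Measure (EuclideanSpace ℝ (Fin d))).restrict Ω,
            ENNReal.ofReal ‖(∫ y in H x,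
                (⟪bvec x, y - x⟫ / ‖y - x‖) * γconv (dist y x) * (u y - u x)) * v x‖ ≤
              ENNReal.ofReal Bb *
                ((ENNReal.ofReal (t * v x ^ 2) * ENNReal.ofReal ((d:ℝ)/η) +
                  (∫⁻ y in Ωδ, ENNReal.ofReal (γdiff (dist x y) * (u y - u x) ^ 2)) *
                    ENNReal.ofReal (1 / (η * t))) / 2) := by
          filter_upwards [ae_restrict_mem hΩmeas, hsecΩ] with x hxΩ hxsec
          have h5 := stmt5_pointwise hδ hη ht hBb Ω Ωδ hball H hH hHmeas bvec hb
            γdiff γconv hγd0 hγc0 hrel u v M hMne hP x hxΩ hxsec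
          rwa [hM] at h5
        exact stmt5_outer hη ht hBb hEu0 Ω Ωδ hsub v hv1 hVInt
          (fun x => ∫ y in H x,
            (⟪bvec x, y - x⟫ / ‖y - x‖) * γconv (dist y x) * (u y - u x))
          (fun x => ∫⁻ y in Ωδ, ENNReal.ofReal (γdiff (dist x y) * (u y - u x) ^ 2))
          hTon hx
      exact amgm_final (Nat.cast_nonneg d) hη hBb hEu0 hV0 hCdef hkt
    refine ⟨C, hCpos, key, ?_⟩
    intro v hv
    refine ⟨ε * energyNorm Ωδ γdiff v + C * Bb * Real.sqrt (∫ x in Ω, v x ^ 2), ?_⟩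
    rintro z ⟨u, rfl⟩
    simp only
    have hNv0 : 0 ≤ energyNorm Ωδ γdiff v := Real.sqrt_nonneg _
    have hNu0 : 0 ≤ energyNorm Ωδ γdiff u.1 := Real.sqrt_nonneg _
    have hsq0 : 0 ≤ Real.sqrt (∫ x in Ω, v x ^ 2) := Real.sqrt_nonneg _
    have hB00 : 0 ≤ ε * energyNorm Ωδ γdiff v + C * Bb * Real.sqrt (∫ x in Ω, v x ^ 2) := by
      have := mul_nonneg (mul_nonneg hCpos.le hBb) hsq0
      nlinarith [mul_nonneg hε.le hNv0]
    have hdfb : |dirichletForm Ωδ γdiff u.1 v| ≤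
        energyNorm Ωδ γdiff u.1 * energyNorm Ωδ γdiff v :=
      stmt5_cs Ωδ γdiff hγd0 u.1 v u.2.2.2.2 hv.2.2.2
    have hcpb := key u.1 v u.2 hv
    have hnum : |ε * dirichletForm Ωδ γdiff u.1 v + convPairing Ω H bvec γconv u.1 v| ≤
        energyNorm Ωδ γdiff u.1 *
          (ε * energyNorm Ωδ γdiff v + C * Bb * Real.sqrt (∫ x in Ω, v x ^ 2)) := by
      calc |ε * dirichletForm Ωδ γdiff u.1 v + convPairing Ω H bvec γconv u.1 v|
          ≤ |ε * dirichletForm Ωδ γdiff u.1 v| + |convPairing Ω H bvec γconv u.1 v| :=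
            abs_add_le _ _
        _ = ε * |dirichletForm Ωδ γdiff u.1 v| + |convPairing Ω H bvec γconv u.1 v| := by
            rw [abs_mul, abs_of_pos hε]
        _ ≤ ε * (energyNorm Ωδ γdiff u.1 * energyNorm Ωδ γdiff v) +
              C * Bb * energyNorm Ωδ γdiff u.1 * Real.sqrt (∫ x in Ω, v x ^ 2) :=
            add_le_add (mul_le_mul_of_nonneg_left hdfb hε.le) hcpb
        _ = energyNorm Ωδ γdiff u.1 *
              (ε * energyNorm Ωδ γdiff v + C * Bb * Real.sqrt (∫ x in Ω, v x ^ 2)) := by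
            ring
    rcases eq_or_lt_of_le hNu0 with h0 | hpos
    · rw [← h0, div_zero]
      exact hB00
    · rw [div_le_iff₀ hpos]
      exact hnum.trans (le_of_eq (mul_comm _ _))
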